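/- Let d ≥ 1. There exists a universal constant C̃ > 0 (depending only on d) such that for every M ∈ ℤ₊, every x, y ∈ ℝ^d and every t > 0 the M-periodized Gaussian kernel satisfies g^M_t(x,y) := Σ_{i ∈ Mℤ^d} g_t(x, y+i) ≤ C̃ · max(t^{-d/2}, M^{-d}), where g_t(x,y) = (4πt)^{-d/2} exp(-|x-y|²/(4t)). -/

import Mathlib

open MeasureTheory Filter Set Topology

open scoped ENNReal


lemma tsum_pi_prod : ∀ (d : ℕ) (f : Fin d → ℤ → ℝ≥0∞),
    ∑' j : Fin d → ℤ, ∏ k, f k (j k) = ∏ k, ∑' n, f k n := by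
  intro d
  induction d with
  | zero =>
    intro f
    simp only [Finset.univ_eq_empty, Finset.prod_empty]
    exact tsum_eq_single (fun i => i.elim0) (fun b hb => absurd (Subsingleton.elim b _) hb)
  | succ d ih =>
    intro f
    rw [← (Fin.consEquiv (fun _ : Fin (d+1) => ℤ)).tsum_eq]
    have : ∀ p : ℤ × (Fin d → ℤ),
        ∏ k, f k ((Fin.consEquiv (fun _ : Fin (d+1) => ℤ)) p k)
          = f 0 p.1 * ∏ k : Fin d, f k.succ (p.2 k) := by
      intro p
      rw [Fin.prod_univ_succ]
      simp [Fin.consEquiv]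
    simp_rw [this]
    rw [ENNReal.tsum_prod', Fin.prod_univ_succ]
    simp_rw [ENNReal.tsum_mul_left]
    rw [ENNReal.tsum_mul_right]
    congr 1
    exact ih (fun k => f k.succ)

lemma telescope (N : ℕ) (hN : 1 ≤ N) :
    ∑' n : ℕ, ENNReal.ofReal (1/((n:ℝ)+N) - 1/((n:ℝ)+N+1)) ≤ ENNReal.ofReal (1/(N:ℝ)) := by
  rw [ENNReal.tsum_eq_iSup_nat]
  apply iSup_le
  intro k
  have h : ∀ n : ℕ, (0:ℝ) ≤ 1/((n:ℝ)+N) - 1/((n:ℝ)+N+1) := by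
    intro n
    have h1 : (0:ℝ) < (n:ℝ)+N := by positivity
    rw [sub_nonneg]
    apply one_div_le_one_div_of_le h1
    linarith
  rw [← ENNReal.ofReal_sum_of_nonneg (fun n _ => h n)]
  apply ENNReal.ofReal_le_ofReal
  have key : ∑ n ∈ Finset.range k, (1/((n:ℝ)+N) - 1/((n:ℝ)+N+1))
      = 1/(((0:ℕ):ℝ)+N) - 1/((k:ℝ)+N) := by
    rw [← Finset.sum_range_sub' (f := fun n : ℕ => 1/((n:ℝ)+N)) k]
    apply Finset.sum_congr rfl
    intro i _
    push_cast
    ring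
  rw [key]
  have h2 : (0:ℝ) ≤ 1/((k:ℝ)+N) := by positivity
  simp only [Nat.cast_zero, zero_add]
  linarith

lemma tailbound (a : ℝ) (ha : 0 < a) (N : ℕ) (hN : 1 ≤ N) :
    ∑' n : ℕ, ENNReal.ofReal (Real.exp (-(a*((n:ℝ)+N+1)^2)))
      ≤ ENNReal.ofReal ((1/a) * (1/(N:ℝ))) := by
  have step : ∀ n : ℕ, ENNReal.ofReal (Real.exp (-(a*((n:ℝ)+N+1)^2)))
      ≤ ENNReal.ofReal ((1/a) * (1/((n:ℝ)+N) - 1/((n:ℝ)+N+1))) := by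
    intro n
    apply ENNReal.ofReal_le_ofReal
    have hN1 : (1:ℝ) ≤ (N:ℝ) := by exact_mod_cast hN
    have h1 : (0:ℝ) < (n:ℝ)+N := by positivity
    have h2 : (0:ℝ) < (n:ℝ)+N+1 := by positivity
    have hx : (0:ℝ) < a*((n:ℝ)+N)*((n:ℝ)+N+1) := by positivity
    have hexp : a*((n:ℝ)+N)*((n:ℝ)+N+1) ≤ Real.exp (a*((n:ℝ)+N+1)^2) := by
      calc a*((n:ℝ)+N)*((n:ℝ)+N+1) ≤ a*((n:ℝ)+N+1)^2 := by nlinarith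
        _ ≤ Real.exp (a*((n:ℝ)+N+1)^2) := by
            linarith [Real.add_one_le_exp (a*((n:ℝ)+N+1)^2)]
    have : Real.exp (-(a*((n:ℝ)+N+1)^2)) ≤ 1/(a*((n:ℝ)+N)*((n:ℝ)+N+1)) := by
      rw [Real.exp_neg]
      rw [inv_le_comm₀ (Real.exp_pos _) (by positivity)] at *
      · rw [one_div, inv_inv]
        exact hexp
    calc Real.exp (-(a*((n:ℝ)+N+1)^2)) ≤ 1/(a*((n:ℝ)+N)*((n:ℝ)+N+1)) := this
      _ = (1/a) * (1/((n:ℝ)+N) - 1/((n:ℝ)+N+1)) := by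
          field_simp
          ring
  calc ∑' n : ℕ, ENNReal.ofReal (Real.exp (-(a*((n:ℝ)+N+1)^2)))
      ≤ ∑' n : ℕ, ENNReal.ofReal ((1/a) * (1/((n:ℝ)+N) - 1/((n:ℝ)+N+1))) :=
        ENNReal.tsum_le_tsum step
    _ = ENNReal.ofReal (1/a) * ∑' n : ℕ, ENNReal.ofReal (1/((n:ℝ)+N) - 1/((n:ℝ)+N+1)) := by
        rw [← ENNReal.tsum_mul_left]
        congr 1
        funext n
        rw [← ENNReal.ofReal_mul (by positivity)]
    _ ≤ ENNReal.ofReal (1/a) * ENNReal.ofReal (1/(N:ℝ)) := by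
        gcongr
        exact telescope N hN
    _ = ENNReal.ofReal ((1/a) * (1/(N:ℝ))) := by
        rw [← ENNReal.ofReal_mul (by positivity)]

set_option maxHeartbeats 1000000 in
lemma gsum (a : ℝ) (ha : 0 < a) :
    ∑' n : ℕ, ENNReal.ofReal (Real.exp (-(a*((n:ℝ)+1)^2)))
      ≤ ENNReal.ofReal (2/Real.sqrt a + 1) := by
  have hsa : 0 < Real.sqrt a := Real.sqrt_pos.mpr ha
  set N : ℕ := ⌈1/Real.sqrt a⌉₊ with hNdef
  have hN : 1 ≤ N := Nat.one_le_iff_ne_zero.mpr (by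
    simp only [hNdef, ne_eq, Nat.ceil_eq_zero, not_le]
    positivity)
  have hNge : 1/Real.sqrt a ≤ (N:ℝ) := Nat.le_ceil _
  have hNle : (N:ℝ) ≤ 1/Real.sqrt a + 1 := (Nat.ceil_lt_add_one (by positivity)).le
  have split := Summable.sum_add_tsum_nat_add' (f := fun n : ℕ => ENNReal.ofReal (Real.exp (-(a*((n:ℝ)+1)^2)))) (k := N) ENNReal.summable
  rw [← split]
  have head : ∑ n ∈ Finset.range N, ENNReal.ofReal (Real.exp (-(a*((n:ℝ)+1)^2)))
      ≤ ENNReal.ofReal (1/Real.sqrt a + 1) := by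
    calc ∑ n ∈ Finset.range N, ENNReal.ofReal (Real.exp (-(a*((n:ℝ)+1)^2)))
        ≤ ∑ _n ∈ Finset.range N, ENNReal.ofReal 1 := by
          apply Finset.sum_le_sum
          intro n _
          apply ENNReal.ofReal_le_ofReal
          rw [← Real.exp_zero]
          apply Real.exp_le_exp.mpr
          nlinarith [sq_nonneg ((n:ℝ)+1)]
      _ = (N : ℝ≥0∞) := by simp
      _ = ENNReal.ofReal (N:ℝ) := (ENNReal.ofReal_natCast N).symm
      _ ≤ ENNReal.ofReal (1/Real.sqrt a + 1) := ENNReal.ofReal_le_ofReal hNle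
  have tail : ∑' n : ℕ, ENNReal.ofReal (Real.exp (-(a*(((n+N:ℕ):ℝ)+1)^2)))
      ≤ ENNReal.ofReal (1/Real.sqrt a) := by
    have : ∀ n : ℕ, ENNReal.ofReal (Real.exp (-(a*(((n+N:ℕ):ℝ)+1)^2)))
        = ENNReal.ofReal (Real.exp (-(a*((n:ℝ)+N+1)^2))) := by
      intro n; congr 2; push_cast; ring
    simp_rw [this]
    calc ∑' n : ℕ, ENNReal.ofReal (Real.exp (-(a*((n:ℝ)+N+1)^2)))
        ≤ ENNReal.ofReal ((1/a) * (1/(N:ℝ))) := tailbound a ha N hN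
      _ ≤ ENNReal.ofReal (1/Real.sqrt a) := by
          apply ENNReal.ofReal_le_ofReal
          have hNpos : (0:ℝ) < N := by exact_mod_cast hN
          rw [div_mul_div_comm, one_mul, div_le_div_iff₀ (by positivity) hsa]
          have h1 : Real.sqrt a * Real.sqrt a = a := Real.mul_self_sqrt ha.le
          have h2 : Real.sqrt a * (N:ℝ) ≥ 1 := by
            calc Real.sqrt a * (N:ℝ) ≥ Real.sqrt a * (1/Real.sqrt a) := by
                  apply mul_le_mul_of_nonneg_left hNge hsa.le
              _ = 1 := by field_simp
          nlinarith
  calc _ ≤ ENNReal.ofReal (1/Real.sqrt a + 1) + ENNReal.ofReal (1/Real.sqrt a) :=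
        add_le_add head tail
    _ = ENNReal.ofReal (2/Real.sqrt a + 1) := by
        rw [← ENNReal.ofReal_add (by positivity) (by positivity)]
        congr 1
        ring

lemma zsum (a : ℝ) (ha : 0 < a) :
    ∑' m : ℤ, ENNReal.ofReal (Real.exp (-(a*((m:ℤ):ℝ)^2)))
      ≤ ENNReal.ofReal (3 + 4/Real.sqrt a) := by
  rw [tsum_of_nat_of_neg_add_one ENNReal.summable ENNReal.summable]
  have hpos : ∑' n : ℕ, ENNReal.ofReal (Real.exp (-(a*(((n:ℤ)):ℝ)^2)))
      ≤ ENNReal.ofReal 1 + ENNReal.ofReal (2/Real.sqrt a + 1) := by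
    rw [tsum_eq_zero_add' ENNReal.summable]
    gcongr
    · simp
    · have : ∀ n : ℕ, ENNReal.ofReal (Real.exp (-(a*(((n+1:ℕ):ℤ):ℝ)^2)))
          = ENNReal.ofReal (Real.exp (-(a*((n:ℝ)+1)^2))) := by
        intro n; congr 3; push_cast; ring
      simp_rw [this]
      exact gsum a ha
  have hneg : ∑' n : ℕ, ENNReal.ofReal (Real.exp (-(a*(((-(n+1):ℤ)):ℝ)^2)))
      ≤ ENNReal.ofReal (2/Real.sqrt a + 1) := by
    have : ∀ n : ℕ, ENNReal.ofReal (Real.exp (-(a*(((-(n+1):ℤ)):ℝ)^2)))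
        = ENNReal.ofReal (Real.exp (-(a*((n:ℝ)+1)^2))) := by
      intro n; congr 3; push_cast; ring
    simp_rw [this]
    exact gsum a ha
  calc _ ≤ (ENNReal.ofReal 1 + ENNReal.ofReal (2/Real.sqrt a + 1))
        + ENNReal.ofReal (2/Real.sqrt a + 1) := by
        exact add_le_add hpos hneg
    _ = ENNReal.ofReal (3 + 4/Real.sqrt a) := by
        have hsa : 0 < Real.sqrt a := Real.sqrt_pos.mpr ha
        rw [← ENNReal.ofReal_add (by norm_num) (by positivity),
          ← ENNReal.ofReal_add (by positivity) (by positivity)]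
        congr 1
        ring

set_option maxHeartbeats 1000000 in
lemma oneD (t : ℝ) (ht : 0 < t) (M : ℕ) (hM : 0 < M) (z : ℝ) :
    ∑' n : ℤ, ENNReal.ofReal ((4*Real.pi*t) ^ (-(1:ℝ)/2) * Real.exp (-(z - (M:ℝ)*(n:ℝ))^2/(4*t)))
      ≤ ENNReal.ofReal (9 * max (t ^ (-(1:ℝ)/2)) ((M:ℝ)⁻¹)) := by
  have hMR : (0:ℝ) < (M:ℝ) := by exact_mod_cast hM
  set c : ℝ := (4*Real.pi*t) ^ (-(1:ℝ)/2) with hc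
  have hc0 : 0 ≤ c := Real.rpow_nonneg (by positivity) _
  set a : ℝ := (M:ℝ)^2/(16*t) with ha
  have ha0 : 0 < a := by positivity
  set j0 : ℤ := round (z/(M:ℝ)) with hj0
  set w : ℝ := z - (M:ℝ)*(j0:ℝ) with hw
  have hwle : |w| ≤ (M:ℝ)/2 := by
    have h := abs_sub_round (z/(M:ℝ))
    have : w = (M:ℝ) * (z/(M:ℝ) - (j0:ℝ)) := by rw [hw, mul_sub, mul_div_cancel₀ _ hMR.ne']
    rw [this, abs_mul, abs_of_pos hMR]
    calc (M:ℝ) * |z/(M:ℝ) - (j0:ℝ)| ≤ (M:ℝ) * (1/2) := by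
          exact mul_le_mul_of_nonneg_left h hMR.le
      _ = (M:ℝ)/2 := by ring
  -- reindex by translation
  rw [← (Equiv.addRight j0).tsum_eq]
  -- termwise bound
  have term : ∀ m : ℤ, ENNReal.ofReal ((4*Real.pi*t) ^ (-(1:ℝ)/2)
        * Real.exp (-(z - (M:ℝ)*(((Equiv.addRight j0) m : ℤ):ℝ))^2/(4*t)))
      ≤ ENNReal.ofReal c * ENNReal.ofReal (Real.exp (-(a*((m:ℤ):ℝ)^2))) := by
    intro m
    rw [← ENNReal.ofReal_mul hc0]
    apply ENNReal.ofReal_le_ofReal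
    rw [← hc]
    apply mul_le_mul_of_nonneg_left _ hc0
    apply Real.exp_le_exp.mpr
    set r : ℝ := ((m:ℤ):ℝ) with hr
    have hze : z - (M:ℝ)*(((Equiv.addRight j0) m : ℤ):ℝ) = w - (M:ℝ)*r := by
      simp only [Equiv.coe_addRight, Int.cast_add, hw, hr]
      ring
    rw [hze]
    have key : (M:ℝ)^2*r^2/4 ≤ (w - (M:ℝ)*r)^2 := by
      rcases eq_or_ne m 0 with rfl | hm
      · simp [hr]
        positivity
      · have h1 : (1:ℝ) ≤ |r| := by
          rw [hr, ← Int.cast_abs]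
          exact_mod_cast Int.one_le_abs hm
        have h2 : (M:ℝ)*|r|/2 ≤ |w - (M:ℝ)*r| := by
          have hMr : (M:ℝ)/2 ≤ (M:ℝ)*|r|/2 := by nlinarith
          calc (M:ℝ)*|r|/2 = (M:ℝ)*|r| - (M:ℝ)*|r|/2 := by ring
            _ ≤ (M:ℝ)*|r| - (M:ℝ)/2 := by linarith
            _ ≤ |(M:ℝ)*r| - |w| := by
                rw [abs_mul, abs_of_pos hMR]
                linarith
            _ ≤ |(M:ℝ)*r - w| := abs_sub_abs_le_abs_sub _ _
            _ = |w - (M:ℝ)*r| := abs_sub_comm _ _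
        have h3 := mul_self_le_mul_self (by positivity) h2
        have habs1 : |r| * |r| = r^2 := by rw [abs_mul_abs_self]; ring
        have habs2 : |w - (M:ℝ)*r| * |w - (M:ℝ)*r| = (w - (M:ℝ)*r)^2 := by
          rw [abs_mul_abs_self]; ring
        have key2 : (M:ℝ)^2*r^2/4 = ((M:ℝ)*|r|/2) * ((M:ℝ)*|r|/2) := by
          rw [← habs1]; ring
        rw [key2, ← habs2]
        exact h3
    have h4t : (0:ℝ) < 4*t := by linarith
    rw [neg_div, neg_le_neg_iff, le_div_iff₀ h4t]
    calc a*r^2*(4*t) = (M:ℝ)^2*r^2/4 := by rw [ha]; field_simp; ring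
      _ ≤ (w - (M:ℝ)*r)^2 := key
  calc ∑' (m : ℤ), ENNReal.ofReal ((4*Real.pi*t) ^ (-(1:ℝ)/2)
        * Real.exp (-(z - (M:ℝ)*(((Equiv.addRight j0) m : ℤ):ℝ))^2/(4*t)))
      ≤ ∑' (m : ℤ), ENNReal.ofReal c * ENNReal.ofReal (Real.exp (-(a*((m:ℤ):ℝ)^2))) :=
        ENNReal.tsum_le_tsum term
    _ = ENNReal.ofReal c * ∑' (m : ℤ), ENNReal.ofReal (Real.exp (-(a*((m:ℤ):ℝ)^2))) :=
        ENNReal.tsum_mul_left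
    _ ≤ ENNReal.ofReal c * ENNReal.ofReal (3 + 4/Real.sqrt a) := by
        gcongr
        exact zsum a ha0
    _ = ENNReal.ofReal (c * (3 + 4/Real.sqrt a)) := by
        rw [← ENNReal.ofReal_mul hc0]
    _ ≤ ENNReal.ofReal (9 * max (t ^ (-(1:ℝ)/2)) ((M:ℝ)⁻¹)) := by
        apply ENNReal.ofReal_le_ofReal
        set s : ℝ := Real.sqrt t with hsdef
        have hs : 0 < s := Real.sqrt_pos.mpr ht
        have hs2 : s^2 = t := Real.sq_sqrt ht.le
        set q : ℝ := Real.sqrt (4*Real.pi) with hqdef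
        have hq0 : 0 < q := Real.sqrt_pos.mpr (by positivity)
        have hq3 : 3 ≤ q := by
          rw [hqdef, show (3:ℝ) = Real.sqrt 9 by
            rw [show (9:ℝ) = 3^2 by norm_num, Real.sqrt_sq (by norm_num)]]
          exact Real.sqrt_le_sqrt (by nlinarith [Real.pi_gt_three])
        have hq2 : q^2 = 4*Real.pi := Real.sq_sqrt (by positivity)
        have hsa : Real.sqrt a = (M:ℝ)/(4*s) := by
          rw [show a = ((M:ℝ)/(4*s))^2 by rw [ha, ← hs2]; ring]
          exact Real.sqrt_sq (by positivity)
        have hceq : c = (q*s)⁻¹ := by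
          rw [hc, show 4*Real.pi*t = (q*s)^2 by rw [mul_pow, hq2, hs2],
            ← Real.rpow_natCast (q*s) 2, ← Real.rpow_mul (by positivity),
            show ((2:ℕ):ℝ) * (-(1:ℝ)/2) = (-1:ℝ) by push_cast; norm_num,
            Real.rpow_neg_one]
        have htpow : t ^ (-(1:ℝ)/2) = s⁻¹ := by
          rw [← hs2, ← Real.rpow_natCast s 2, ← Real.rpow_mul hs.le,
            show ((2:ℕ):ℝ) * (-(1:ℝ)/2) = (-1:ℝ) by push_cast; norm_num,
            Real.rpow_neg_one]
        have e1 : c * (3 + 4/Real.sqrt a) = 3/(q*s) + 16/(q*(M:ℝ)) := by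
          rw [hceq, hsa]
          field_simp
          ring
        rw [e1, htpow]
        have hmax1 : s⁻¹ ≤ max s⁻¹ ((M:ℝ)⁻¹) := le_max_left _ _
        have hmax2 : (M:ℝ)⁻¹ ≤ max s⁻¹ ((M:ℝ)⁻¹) := le_max_right _ _
        have hmax0 : 0 ≤ max s⁻¹ ((M:ℝ)⁻¹) := le_trans (by positivity) hmax1
        have h1 : 3/(q*s) ≤ s⁻¹ := by
          rw [div_le_iff₀ (by positivity)]
          have he : s⁻¹*(q*s) = q := by field_simp
          rw [he]
          linarith
        have h2 : 16/(q*(M:ℝ)) ≤ 6*(M:ℝ)⁻¹ := by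
          rw [div_le_iff₀ (by positivity)]
          have : 6*(M:ℝ)⁻¹*(q*(M:ℝ)) = 6*q := by field_simp
          rw [this]
          nlinarith
        calc 3/(q*s) + 16/(q*(M:ℝ)) ≤ s⁻¹ + 6*(M:ℝ)⁻¹ := add_le_add h1 h2
          _ ≤ max s⁻¹ ((M:ℝ)⁻¹) + 6*(max s⁻¹ ((M:ℝ)⁻¹)) := by
              apply add_le_add hmax1
              nlinarith
          _ ≤ 9 * max s⁻¹ ((M:ℝ)⁻¹) := by nlinarith
/-- There is a universal `C̃ > 0` (depending only on d) such that the
M-periodized Gaussian kernel satisfies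
`g^M_t(x,y) = Σ_{i ∈ Mℤ^d} g_t(x,y+i) ≤ C̃ max(t^{-d/2}, M^{-d})`. -/
theorem stmt4 (d : ℕ) (hd : 1 ≤ d) :
    ∃ C > (0:ℝ), ∀ M : ℕ, 0 < M → ∀ x y : Fin d → ℝ, ∀ t > (0:ℝ),
      (∑' j : Fin d → ℤ,
          ENNReal.ofReal ((4 * Real.pi * t) ^ (-(d:ℝ)/2)
            * Real.exp (-(∑ k, (x k - (y k + (M:ℝ) * ((j k : ℤ) : ℝ)))^2) / (4*t))))
        ≤ ENNReal.ofReal (C * max (t ^ (-(d:ℝ)/2)) ((M:ℝ) ^ (-(d:ℝ)))) := by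
  refine ⟨9^d, by positivity, ?_⟩
  intro M hM x y t ht
  have hMR : (0:ℝ) < (M:ℝ) := by exact_mod_cast hM
  set F : Fin d → ℤ → ENNReal := fun k n =>
    ENNReal.ofReal ((4*Real.pi*t) ^ (-(1:ℝ)/2)
      * Real.exp (-((x k - y k) - (M:ℝ)*(n:ℝ))^2/(4*t))) with hF
  have hterm : ∀ j : Fin d → ℤ,
      ENNReal.ofReal ((4 * Real.pi * t) ^ (-(d:ℝ)/2)
          * Real.exp (-(∑ k, (x k - (y k + (M:ℝ) * ((j k : ℤ) : ℝ)))^2) / (4*t)))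
        = ∏ k, F k (j k) := by
    intro j
    have hreal : (4 * Real.pi * t) ^ (-(d:ℝ)/2)
        * Real.exp (-(∑ k, (x k - (y k + (M:ℝ) * ((j k : ℤ) : ℝ)))^2) / (4*t))
        = ∏ k, ((4*Real.pi*t) ^ (-(1:ℝ)/2)
            * Real.exp (-((x k - y k) - (M:ℝ)*((j k : ℤ):ℝ))^2/(4*t))) := by
      rw [Finset.prod_mul_distrib, Finset.prod_const, Finset.card_univ, Fintype.card_fin]
      congr 1
      · rw [← Real.rpow_natCast ((4*Real.pi*t) ^ (-(1:ℝ)/2)) d,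
          ← Real.rpow_mul (by positivity)]
        congr 1
        push_cast
        ring
      · rw [← Real.exp_sum]
        congr 1
        rw [← Finset.sum_div, ← Finset.sum_neg_distrib]
        congr 1
        · congr 1
          funext k
          ring
    rw [hreal, ENNReal.ofReal_prod_of_nonneg]
    intro k _
    have h1 : (0:ℝ) ≤ (4*Real.pi*t) ^ (-(1:ℝ)/2) := Real.rpow_nonneg (by positivity) _
    positivity
  simp_rw [hterm]
  rw [tsum_pi_prod d F]
  set m1 : ℝ := max (t ^ (-(1:ℝ)/2)) ((M:ℝ)⁻¹) with hm1
  have hm10 : 0 ≤ m1 := le_trans (Real.rpow_nonneg ht.le _) (le_max_left _ _)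
  calc ∏ k, ∑' n : ℤ, F k n
      ≤ ∏ _k : Fin d, ENNReal.ofReal (9 * m1) := by
        apply Finset.prod_le_prod'
        intro k _
        exact oneD t ht M hM (x k - y k)
    _ = ENNReal.ofReal (9 * m1) ^ d := by
        rw [Finset.prod_const, Finset.card_univ, Fintype.card_fin]
    _ = ENNReal.ofReal ((9 * m1) ^ d) := (ENNReal.ofReal_pow (by positivity) d).symm
    _ ≤ ENNReal.ofReal ((9:ℝ)^d * max (t ^ (-(d:ℝ)/2)) ((M:ℝ) ^ (-(d:ℝ)))) := by
        apply ENNReal.ofReal_le_ofReal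
        rw [mul_pow]
        apply mul_le_mul_of_nonneg_left _ (by positivity)
        have hmaxpow : m1 ^ d = max ((t ^ (-(1:ℝ)/2))^d) (((M:ℝ)⁻¹)^d) := by
          rcases le_total (t ^ (-(1:ℝ)/2)) ((M:ℝ)⁻¹) with h | h
          · rw [hm1, max_eq_right h,
              max_eq_right (pow_le_pow_left₀ (Real.rpow_nonneg ht.le _) h d)]
          · rw [hm1, max_eq_left h,
              max_eq_left (pow_le_pow_left₀ (by positivity) h d)]
        rw [hmaxpow]
        have e1 : (t ^ (-(1:ℝ)/2))^d = t ^ (-(d:ℝ)/2) := by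
          rw [← Real.rpow_natCast (t ^ (-(1:ℝ)/2)) d, ← Real.rpow_mul ht.le]
          congr 1
          push_cast
          ring
        have e2 : ((M:ℝ)⁻¹)^d = (M:ℝ) ^ (-(d:ℝ)) := by
          rw [inv_pow, ← Real.rpow_natCast (M:ℝ) d, ← Real.rpow_neg hMR.le]
        rw [e1, e2]
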